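/- Let A, B be bounded self-adjoint positive operators on a Hilbert space with max(‖A‖, ‖B‖) ≤ C. Then for any r ∈ [0,1], ‖A^r − B^r‖ ≤ ‖A−B‖^r. -/

import Mathlib

set_option maxHeartbeats 1000000
set_option synthInstance.maxHeartbeats 400000

open scoped NNReal ENNReal
open Filter

namespace Stmt2Aux

variable {A : Type*} [CStarAlgebra A] [PartialOrder A] [StarOrderedRing A]

lemma spectralRadius_mul_comm (a b : A) :
    spectralRadius ℂ (a * b) = spectralRadius ℂ (b * a) := by
  have key : ∀ x y : A, spectralRadius ℂ (x * y) ≤ spectralRadius ℂ (y * x) := by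
    intro x y
    rw [spectralRadius, spectralRadius]
    refine iSup₂_le fun k hk => ?_
    rcases eq_or_ne k 0 with rfl | hk0
    · simp
    · have hmem : k ∈ spectrum ℂ (x * y) \ {0} := ⟨hk, hk0⟩
      rw [spectrum.nonzero_mul_comm x y] at hmem
      exact le_iSup₂ (f := fun k (_ : k ∈ spectrum ℂ (y * x)) => (‖k‖₊ : ℝ≥0∞)) k hmem.1
  exact le_antisymm (key a b) (key b a)

lemma norm_rpow_mul_rpow_neg_le_one [Nontrivial A] {a b : A} (ha : 0 ≤ a) (hb : 0 ≤ b)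
    (hau : IsUnit a) (hbu : IsUnit b) {w : ℝ} (hw : 0 ≤ w) (hab : a ^ w ≤ b ^ w) :
    ‖a ^ (w / 2) * b ^ (-(w / 2))‖ ≤ 1 := by
  have ha0 : (0 : ℝ≥0) ∉ spectrum ℝ≥0 a := spectrum.zero_notMem ℝ≥0 hau
  have hb0 : (0 : ℝ≥0) ∉ spectrum ℝ≥0 b := spectrum.zero_notMem ℝ≥0 hbu
  rcases hw.eq_or_lt with rfl | hw'
  · rw [show -((0:ℝ)/2) = 0 by norm_num, show (0:ℝ)/2 = 0 by norm_num,
      CFC.rpow_zero a ha, CFC.rpow_zero b hb, one_mul, norm_one]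
  · have hbwu : IsUnit (b ^ w) :=
      ⟨⟨b ^ w, b ^ (-w), CFC.rpow_mul_rpow_neg w (hbu.isStrictlyPositive hb), CFC.rpow_neg_mul_rpow w (hbu.isStrictlyPositive hb)⟩, rfl⟩
    have h := (le_iff_norm_sqrt_mul_rpow (a ^ w) (b ^ w) CFC.rpow_nonneg (hbwu.isStrictlyPositive CFC.rpow_nonneg)).mp hab
    rwa [CFC.sqrt_rpow hau hw'.ne', CFC.rpow_rpow b w (-(1/2)) hw'.ne' (hbu.isStrictlyPositive hb),
      show w * (-(1/2) : ℝ) = -(w/2) by ring] at h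

lemma midpoint [Nontrivial A] {a b : A} (ha : 0 ≤ a) (hb : 0 ≤ b)
    (hau : IsUnit a) (hbu : IsUnit b) {s t : ℝ} (hs0 : 0 ≤ s) (ht0 : 0 ≤ t)
    (hs : a ^ s ≤ b ^ s) (ht : a ^ t ≤ b ^ t) :
    a ^ ((s + t) / 2) ≤ b ^ ((s + t) / 2) := by
  set u : ℝ := (s + t) / 2 with hu
  have hu0 : 0 ≤ u := by positivity
  rcases hu0.eq_or_lt with h0 | hupos
  · rw [← h0, CFC.rpow_zero a ha, CFC.rpow_zero b hb]
  have ha0 : (0 : ℝ≥0) ∉ spectrum ℝ≥0 a := spectrum.zero_notMem ℝ≥0 hau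
  have hb0 : (0 : ℝ≥0) ∉ spectrum ℝ≥0 b := spectrum.zero_notMem ℝ≥0 hbu
  have hbuu : IsUnit (b ^ u) :=
    ⟨⟨b ^ u, b ^ (-u), CFC.rpow_mul_rpow_neg u (hbu.isStrictlyPositive hb), CFC.rpow_neg_mul_rpow u (hbu.isStrictlyPositive hb)⟩, rfl⟩
  rw [le_iff_norm_sqrt_mul_rpow (a ^ u) (b ^ u) CFC.rpow_nonneg (hbuu.isStrictlyPositive CFC.rpow_nonneg),
    CFC.sqrt_rpow hau hupos.ne', CFC.rpow_rpow b u (-(1/2)) hupos.ne' (hbu.isStrictlyPositive hb),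
    show u * (-(1/2) : ℝ) = -(u/2) by ring]
  set x := a ^ (u / 2) * b ^ (-(u / 2)) with hx
  have sa1 : IsSelfAdjoint (a ^ (u/2) : A) := .of_nonneg CFC.rpow_nonneg
  have sa2 : IsSelfAdjoint (b ^ (-(u/2)) : A) := .of_nonneg CFC.rpow_nonneg
  have hsx : star x = b ^ (-(u/2)) * a ^ (u/2) := by
    rw [hx, star_mul, sa1.star_eq, sa2.star_eq]
  have hy : x * star x = a ^ (u/2) * (b ^ (-u) * a ^ (u/2)) := by
    rw [hsx, hx]
    have : b ^ (-(u/2)) * b ^ (-(u/2)) = b ^ (-u) := by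
      rw [← CFC.rpow_add hbu, show -(u/2) + -(u/2) = -u by ring]
    calc a ^ (u/2) * b ^ (-(u/2)) * (b ^ (-(u/2)) * a ^ (u/2))
        = a ^ (u/2) * ((b ^ (-(u/2)) * b ^ (-(u/2))) * a ^ (u/2)) := by
          simp only [mul_assoc]
      _ = a ^ (u/2) * (b ^ (-u) * a ^ (u/2)) := by rw [this]
  have hxsa : IsSelfAdjoint (x * star x) := IsSelfAdjoint.mul_star_self x
  set P := b ^ (-(s/2)) * a ^ (s/2) with hP
  set Q := a ^ (t/2) * b ^ (-(t/2)) with hQ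
  have h2 : spectralRadius ℂ (x * star x) = spectralRadius ℂ (b ^ (-u) * a ^ u) := by
    rw [hy, spectralRadius_mul_comm]
    congr 1
    rw [mul_assoc, ← CFC.rpow_add hau, show u/2 + u/2 = u by ring]
  have h3 : spectralRadius ℂ (b ^ (-u) * a ^ u) = spectralRadius ℂ (P * Q) := by
    have hbu' : (b : A) ^ (-u) = b ^ (-(t/2)) * b ^ (-(s/2)) := by
      rw [← CFC.rpow_add hbu]; congr 1; rw [hu]; ring
    have hau' : (a : A) ^ u = a ^ (s/2) * a ^ (t/2) := by
      rw [← CFC.rpow_add hau]; congr 1; rw [hu]; ring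
    rw [hbu', hau']
    have e1 : b ^ (-(t/2)) * b ^ (-(s/2)) * (a ^ (s/2) * a ^ (t/2))
        = b ^ (-(t/2)) * (P * a ^ (t/2)) := by
      rw [hP]; simp only [mul_assoc]
    rw [e1, spectralRadius_mul_comm, hP, hQ]
    congr 1
    simp only [mul_assoc]
  have step : (‖x * star x‖₊ : ℝ≥0∞) ≤ ((‖P‖₊ * ‖Q‖₊ : ℝ≥0) : ℝ≥0∞) := by
    rw [← hxsa.spectralRadius_eq_nnnorm, h2, h3]
    exact (spectrum.spectralRadius_le_nnnorm _).trans
      (ENNReal.coe_le_coe.mpr (nnnorm_mul_le _ _))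
  have step2 : ‖x * star x‖ ≤ ‖P‖ * ‖Q‖ := by
    rw [ENNReal.coe_le_coe] at step
    exact_mod_cast step
  have h5 : ‖P‖ ≤ 1 := by
    have sa3 : IsSelfAdjoint (a ^ (s/2) : A) := .of_nonneg CFC.rpow_nonneg
    have sa4 : IsSelfAdjoint (b ^ (-(s/2)) : A) := .of_nonneg CFC.rpow_nonneg
    rw [hP, ← norm_star, star_mul, sa3.star_eq, sa4.star_eq]
    exact norm_rpow_mul_rpow_neg_le_one ha hb hau hbu hs0 hs
  have h6 : ‖Q‖ ≤ 1 := norm_rpow_mul_rpow_neg_le_one ha hb hau hbu ht0 ht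
  have hxx : ‖x‖ * ‖x‖ ≤ 1 := by
    rw [← CStarRing.norm_self_mul_star]
    calc ‖x * star x‖ ≤ ‖P‖ * ‖Q‖ := step2
      _ ≤ 1 := by nlinarith [norm_nonneg P, norm_nonneg Q]
  nlinarith [norm_nonneg x]

lemma dyadic [Nontrivial A] {a b : A} (ha : 0 ≤ a) (hb : 0 ≤ b)
    (hau : IsUnit a) (hbu : IsUnit b) (hab : a ≤ b) :
    ∀ n k : ℕ, k ≤ 2 ^ n → a ^ ((k : ℝ) / 2 ^ n) ≤ b ^ ((k : ℝ) / 2 ^ n) := by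
  intro n
  induction n with
  | zero =>
    intro k hk
    interval_cases k
    · norm_num
      rw [CFC.rpow_zero a ha, CFC.rpow_zero b hb]
    · norm_num
      rwa [CFC.rpow_one a ha, CFC.rpow_one b hb]
  | succ n ih =>
    intro k hk
    rcases Nat.even_or_odd k with ⟨j, hj⟩ | ⟨j, hj⟩
    · have hj' : j ≤ 2 ^ n := by omega
      have := ih j hj'
      have hcast : ((k : ℝ) / 2 ^ (n+1)) = (j : ℝ) / 2 ^ n := by
        subst hj; push_cast; ring
      rwa [hcast]
    · have hj1 : j + 1 ≤ 2 ^ n := by omega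
      have h1 := ih j (by omega)
      have h2 := ih (j+1) hj1
      have := midpoint ha hb hau hbu (by positivity) (by positivity) h1 h2
      have hcast : (((j:ℕ):ℝ)/2^n + (((j+1:ℕ)):ℝ)/2^n) / 2 = (k : ℝ) / 2 ^ (n+1) := by
        subst hj; push_cast; ring
      rwa [hcast] at this

lemma rpow_eq_cfc_real {a : A} (r : ℝ) (ha : 0 ≤ a) :
    a ^ r = cfc (fun x : ℝ => x ^ r) a := by
  rw [CFC.rpow_def, cfc_nnreal_eq_real _ a ha]
  refine cfc_congr fun x hx => ?_
  have hx0 : 0 ≤ x := spectrum_nonneg_of_nonneg ha hx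
  simp only [NNReal.coe_rpow, Real.coe_toNNReal x hx0]

lemma abs_exp_sub_exp (u v : ℝ) :
    |Real.exp u - Real.exp v| ≤ |u - v| * Real.exp (max u v) := by
  wlog h : v ≤ u generalizing u v
  · have := this v u (le_of_not_ge h)
    rwa [abs_sub_comm, abs_sub_comm v u, max_comm] at this
  rw [max_eq_left h, abs_of_nonneg (sub_nonneg.2 (Real.exp_le_exp.2 h)),
    abs_of_nonneg (sub_nonneg.2 h)]
  have hvu : Real.exp v = Real.exp u * Real.exp (v - u) := by
    rw [← Real.exp_add]; ring_nf
  nlinarith [Real.add_one_le_exp (v - u), Real.exp_pos u]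

lemma rpow_lipschitz {ε M x p q : ℝ} (hε : 0 < ε) (hx : ε ≤ x) (hxM : x ≤ M)
    (hp0 : 0 ≤ p) (hp1 : p ≤ 1) (hq0 : 0 ≤ q) (hq1 : q ≤ 1) :
    |x ^ p - x ^ q| ≤
      (max |Real.log ε| |Real.log M|) * Real.exp (max |Real.log ε| |Real.log M|) * |p - q| := by
  have hx0 : 0 < x := hε.trans_le hx
  set L := max |Real.log ε| |Real.log M| with hL
  have hL0 : 0 ≤ L := le_trans (abs_nonneg _) (le_max_left _ _)
  have hlx : |Real.log x| ≤ L := by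
    rcases le_or_gt (Real.log x) 0 with h | h
    · have hle : Real.log ε ≤ Real.log x := Real.log_le_log hε hx
      calc |Real.log x| = -(Real.log x) := abs_of_nonpos h
        _ ≤ -(Real.log ε) := by linarith
        _ ≤ |Real.log ε| := neg_le_abs _
        _ ≤ L := le_max_left _ _
    · have hle : Real.log x ≤ Real.log M := Real.log_le_log hx0 hxM
      calc |Real.log x| = Real.log x := abs_of_pos h
        _ ≤ Real.log M := hle
        _ ≤ |Real.log M| := le_abs_self _
        _ ≤ L := le_max_right _ _
  rw [Real.rpow_def_of_pos hx0, Real.rpow_def_of_pos hx0,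
    mul_comm (Real.log x) p, mul_comm (Real.log x) q]
  refine (abs_exp_sub_exp _ _).trans ?_
  have h1 : |p * Real.log x - q * Real.log x| = |p - q| * |Real.log x| := by
    rw [← sub_mul, abs_mul]
  have h2 : max (p * Real.log x) (q * Real.log x) ≤ L := by
    refine max_le ?_ ?_ <;>
    · refine le_trans (le_abs_self _) ?_
      rw [abs_mul]
      calc _ ≤ 1 * L := by
            apply mul_le_mul _ hlx (abs_nonneg _) zero_le_one
            rw [abs_le]; constructor <;> linarith
        _ = L := one_mul L
  rw [h1]
  calc |p - q| * |Real.log x| * Real.exp (max (p * Real.log x) (q * Real.log x))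
      ≤ (|p - q| * L) * Real.exp L := by
        apply mul_le_mul (mul_le_mul_of_nonneg_left hlx (abs_nonneg _))
          (Real.exp_le_exp.2 h2) (Real.exp_pos _).le (by positivity)
    _ = L * Real.exp L * |p - q| := by ring

lemma tendsto_rpow_of_tendsto [Nontrivial A] {a : A} (ha : 0 ≤ a) (hau : IsUnit a)
    {r : ℝ} {q : ℕ → ℝ} (hq0 : ∀ n, 0 ≤ q n) (hq1 : ∀ n, q n ≤ 1)
    (hr0 : 0 ≤ r) (hr1 : r ≤ 1) (hq : Tendsto q atTop (nhds r)) :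
    Tendsto (fun n => a ^ (q n)) atTop (nhds (a ^ r)) := by
  have hsa : IsSelfAdjoint a := .of_nonneg ha
  have hne : (spectrum ℝ a).Nonempty := CFC.spectrum_nonempty (R := ℝ) a hsa
  have hcpt : IsCompact (spectrum ℝ a) := spectrum.isCompact a
  obtain ⟨ε, hεmem, hεmin⟩ := hcpt.exists_isMinOn hne continuousOn_id
  have hε0 : 0 < ε := by
    rcases (spectrum_nonneg_of_nonneg ha hεmem).eq_or_lt with h0 | h
    · exact absurd (h0 ▸ hεmem) (spectrum.zero_notMem ℝ hau)
    · exact h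
  have hMx : ∀ x ∈ spectrum ℝ a, x ≤ ‖a‖ := fun x hx =>
    (le_abs_self x).trans (spectrum.norm_le_norm_of_mem hx)
  set L := max |Real.log ε| |Real.log ‖a‖| with hLdef
  set K := L * Real.exp L with hKdef
  have hL0 : 0 ≤ L := le_trans (abs_nonneg _) (le_max_left _ _)
  have hK0 : 0 ≤ K := by positivity
  have hcont : ∀ w : ℝ, ContinuousOn (fun x : ℝ => x ^ w) (spectrum ℝ a) := fun w x hx =>
    (Real.continuousAt_rpow_const x w (Or.inl ((hε0.trans_le (hεmin hx)).ne'))).continuousWithinAt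
  have key : ∀ n, ‖a ^ (q n) - a ^ r‖ ≤ K * |q n - r| := by
    intro n
    rw [rpow_eq_cfc_real (q n) ha, rpow_eq_cfc_real r ha,
      ← cfc_sub _ _ a (hcont (q n)) (hcont r)]
    refine norm_cfc_le (by positivity) fun x hx => ?_
    have h1 : ε ≤ x := hεmin hx
    have h2 : x ≤ ‖a‖ := hMx x hx
    simpa [Real.norm_eq_abs, hKdef, hLdef] using
      rpow_lipschitz hε0 h1 h2 (hq0 n) (hq1 n) hr0 hr1
  rw [tendsto_iff_norm_sub_tendsto_zero]
  have hlim : Tendsto (fun n => K * |q n - r|) atTop (nhds 0) := by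
    have h1 : Tendsto (fun n => q n - r) atTop (nhds (r - r)) :=
      hq.sub tendsto_const_nhds
    rw [sub_self] at h1
    have h2 : Tendsto (fun n => |q n - r|) atTop (nhds 0) := by
      simpa using h1.abs
    have h3 := h2.const_mul K
    rwa [mul_zero] at h3
  exact squeeze_zero (fun n => norm_nonneg _) key hlim

lemma LH_units [Nontrivial A] {a b : A} (ha : 0 ≤ a) (hb : 0 ≤ b)
    (hau : IsUnit a) (hbu : IsUnit b) (hab : a ≤ b) {r : ℝ}
    (hr0 : 0 ≤ r) (hr1 : r ≤ 1) : a ^ r ≤ b ^ r := by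
  set q : ℕ → ℝ := fun n => ((⌊r * 2 ^ n⌋ : ℤ) : ℝ) / 2 ^ n with hqdef
  have h2n : ∀ n : ℕ, (0:ℝ) < 2 ^ n := fun n => by positivity
  have hfl0 : ∀ n, (0 : ℤ) ≤ ⌊r * 2 ^ n⌋ := fun n => Int.le_floor.2 (by push_cast; positivity)
  have hfl1 : ∀ n, ⌊r * 2 ^ n⌋ ≤ 2 ^ n := by
    intro n
    have h : r * 2 ^ n ≤ (((2:ℤ) ^ n : ℤ) : ℝ) := by push_cast; nlinarith [h2n n]
    exact_mod_cast (Int.floor_le (r * 2 ^ n)).trans h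
  have hdyq : ∀ n, a ^ q n ≤ b ^ q n := by
    intro n
    have hk : (⌊r * 2 ^ n⌋).toNat ≤ 2 ^ n := by
      rw [Int.toNat_le]
      exact_mod_cast hfl1 n
    have := dyadic ha hb hau hbu hab n (⌊r * 2 ^ n⌋).toNat hk
    have hcast : ((((⌊r * 2 ^ n⌋).toNat : ℕ)) : ℝ) = ((⌊r * 2 ^ n⌋ : ℤ) : ℝ) := by
      exact_mod_cast Int.toNat_of_nonneg (hfl0 n)
    rw [hcast] at this
    exact this
  have hq0 : ∀ n, 0 ≤ q n := fun n => by
    apply div_nonneg _ (h2n n).le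
    exact_mod_cast hfl0 n
  have hq1 : ∀ n, q n ≤ 1 := fun n => by
    rw [hqdef, div_le_one (h2n n)]
    exact_mod_cast hfl1 n
  have hqr : Tendsto q atTop (nhds r) := by
    have key : ∀ n, |q n - r| ≤ (1/2 : ℝ) ^ n := by
      intro n
      have h1 : ((⌊r * 2 ^ n⌋ : ℤ) : ℝ) ≤ r * 2 ^ n := Int.floor_le _
      have h2 : r * 2 ^ n - 1 < ((⌊r * 2 ^ n⌋ : ℤ) : ℝ) := Int.sub_one_lt_floor _
      have hpow : (1/2 : ℝ) ^ n * 2 ^ n = 1 := by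
        rw [← mul_pow]; norm_num
      have hqn : q n = ((⌊r * 2 ^ n⌋ : ℤ) : ℝ) / 2 ^ n := rfl
      have hsub : q n - r = (((⌊r * 2 ^ n⌋ : ℤ) : ℝ) - r * 2 ^ n) / 2 ^ n := by
        rw [hqn]; field_simp
      rw [hsub, abs_div, abs_of_pos (h2n n), div_le_iff₀ (h2n n)]
      have h3 : (1/2 : ℝ) ^ n * 2 ^ n = 1 := hpow
      rw [abs_le]
      constructor <;> nlinarith [h2n n]
    have h0 : Tendsto (fun n => ((1:ℝ)/2) ^ n) atTop (nhds 0) :=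
      tendsto_pow_atTop_nhds_zero_of_lt_one (by norm_num) (by norm_num)
    have habs : Tendsto (fun n => |q n - r|) atTop (nhds 0) :=
      squeeze_zero (fun n => abs_nonneg _) key h0
    rw [tendsto_iff_norm_sub_tendsto_zero]
    simpa [Real.norm_eq_abs] using habs
  exact le_of_tendsto_of_tendsto' (tendsto_rpow_of_tendsto ha hau hq0 hq1 hr0 hr1 hqr)
    (tendsto_rpow_of_tendsto hb hbu hq0 hq1 hr0 hr1 hqr) hdyq

lemma algebraMap_nnreal_nonneg {a : A} (ha : 0 ≤ a) (c : ℝ≥0) :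
    (0 : A) ≤ algebraMap ℝ≥0 A c := by
  rw [← cfc_const c a ha]
  exact cfc_nonneg_of_predicate

lemma add_algebraMap_eq_cfc {a : A} (ha : 0 ≤ a) (c : ℝ≥0) :
    a + algebraMap ℝ≥0 A c = cfc (fun x : ℝ≥0 => x + c) a := by
  have h := cfc_add_const c (id : ℝ≥0 → ℝ≥0) a (by fun_prop) ha
  rw [cfc_id ℝ≥0 a ha] at h
  exact h.symm

lemma rpow_le_rpow_add_algebraMap {b : A} (hb : 0 ≤ b) (c : ℝ≥0) {r : ℝ}
    (hr0 : 0 ≤ r) : b ^ r ≤ (b + algebraMap ℝ≥0 A c) ^ r := by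
  have hbc : 0 ≤ b + algebraMap ℝ≥0 A c :=
    add_nonneg hb (algebraMap_nnreal_nonneg hb c)
  have hcomp : (b + algebraMap ℝ≥0 A c) ^ r = cfc (fun x : ℝ≥0 => (x + c) ^ r) b := by
    rw [add_algebraMap_eq_cfc hb c, CFC.rpow_def,
      ← cfc_comp' (R := ℝ≥0) (fun x : ℝ≥0 => x ^ r) (fun x : ℝ≥0 => x + c) b
        ((NNReal.continuous_rpow_const hr0).continuousOn) (by fun_prop) hb]
  rw [hcomp, CFC.rpow_def]
  exact cfc_mono (fun x hx => NNReal.rpow_le_rpow (le_add_right le_rfl) hr0)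
    ((NNReal.continuous_rpow_const hr0).continuousOn) ((NNReal.continuous_rpow_const hr0).comp (continuous_add_right c)).continuousOn

lemma add_algebraMap_rpow_le {b : A} (hb : 0 ≤ b) (c : ℝ≥0) {r : ℝ}
    (hr0 : 0 ≤ r) (hr1 : r ≤ 1) :
    (b + algebraMap ℝ≥0 A c) ^ r ≤ b ^ r + algebraMap ℝ≥0 A (c ^ r) := by
  have hcomp : (b + algebraMap ℝ≥0 A c) ^ r = cfc (fun x : ℝ≥0 => (x + c) ^ r) b := by
    rw [add_algebraMap_eq_cfc hb c, CFC.rpow_def,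
      ← cfc_comp' (R := ℝ≥0) (fun x : ℝ≥0 => x ^ r) (fun x : ℝ≥0 => x + c) b
        ((NNReal.continuous_rpow_const hr0).continuousOn) (by fun_prop) hb]
  have hsum : b ^ r + algebraMap ℝ≥0 A (c ^ r) = cfc (fun x : ℝ≥0 => x ^ r + c ^ r) b := by
    have h := cfc_add_const (c ^ r) (fun x : ℝ≥0 => x ^ r) b
      ((NNReal.continuous_rpow_const hr0).continuousOn) hb
    rw [← CFC.rpow_def] at h
    exact h.symm
  rw [hcomp, hsum]
  exact cfc_mono (fun x hx => NNReal.rpow_add_le_add_rpow x c hr0 hr1)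
    ((NNReal.continuous_rpow_const hr0).comp (continuous_add_right c)).continuousOn
    (((NNReal.continuous_rpow_const hr0).add continuous_const).continuousOn)

lemma LH {a b : A} (ha : 0 ≤ a) (hab : a ≤ b) {r : ℝ}
    (hr0 : 0 ≤ r) (hr1 : r ≤ 1) : a ^ r ≤ b ^ r := by
  obtain hS | hN := subsingleton_or_nontrivial A
  · exact le_of_eq (Subsingleton.elim _ _)
  have hb : 0 ≤ b := ha.trans hab
  rcases hr0.eq_or_lt with h0 | hrpos
  · rw [← h0, CFC.rpow_zero a ha, CFC.rpow_zero b hb]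
  have main : ∀ ε : ℝ≥0, 0 < ε → a ^ r ≤ b ^ r + algebraMap ℝ≥0 A (ε ^ r) := by
    intro ε hε
    have heps0 : (0 : A) ≤ algebraMap ℝ≥0 A ε := algebraMap_nnreal_nonneg ha ε
    have hunit_eps : IsUnit (algebraMap ℝ≥0 A ε) :=
      (isUnit_iff_ne_zero.2 hε.ne').map (algebraMap ℝ≥0 A)
    have h1 : algebraMap ℝ≥0 A ε ≤ a + algebraMap ℝ≥0 A ε := le_add_of_nonneg_left ha
    have h1' : algebraMap ℝ≥0 A ε ≤ b + algebraMap ℝ≥0 A ε := le_add_of_nonneg_left hb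
    have hae : 0 ≤ a + algebraMap ℝ≥0 A ε := add_nonneg ha heps0
    have hbe : 0 ≤ b + algebraMap ℝ≥0 A ε := add_nonneg hb heps0
    have haeu : IsUnit (a + algebraMap ℝ≥0 A ε) :=
      CStarAlgebra.isUnit_of_le _ h1 (hunit_eps.isStrictlyPositive heps0)
    have hbeu : IsUnit (b + algebraMap ℝ≥0 A ε) :=
      CStarAlgebra.isUnit_of_le _ h1' (hunit_eps.isStrictlyPositive heps0)
    calc a ^ r ≤ (a + algebraMap ℝ≥0 A ε) ^ r := rpow_le_rpow_add_algebraMap ha ε hr0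
      _ ≤ (b + algebraMap ℝ≥0 A ε) ^ r :=
          LH_units hae hbe haeu hbeu (add_le_add_left hab _) hr0 hr1
      _ ≤ b ^ r + algebraMap ℝ≥0 A (ε ^ r) := add_algebraMap_rpow_le hb ε hr0 hr1
  set c : ℕ → ℝ≥0 := fun n => (n + 1 : ℝ≥0)⁻¹ with hcdef
  have hcpos : ∀ n, 0 < c n := fun n => by positivity
  have hreal : ∀ n, ((c n ^ r : ℝ≥0) : ℝ) = (((n:ℝ) + 1)⁻¹) ^ r := by
    intro n
    rw [NNReal.coe_rpow]
    norm_num [hcdef]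
  have hc0 : Tendsto (fun n => ((c n ^ r : ℝ≥0) : ℝ)) atTop (nhds 0) := by
    have h1 : Tendsto (fun n : ℕ => ((n:ℝ) + 1)⁻¹) atTop (nhds 0) := by
      simpa [one_div] using tendsto_one_div_add_atTop_nhds_zero_nat (𝕜 := ℝ)
    have h2 : ContinuousAt (fun x : ℝ => x ^ r) 0 :=
      Real.continuousAt_rpow_const 0 r (Or.inr hr0)
    have h3 := (h2.tendsto.comp h1)
    rw [Real.zero_rpow hrpos.ne'] at h3
    simp only [hreal]
    exact h3
  have hlim : Tendsto (fun n => b ^ r + algebraMap ℝ≥0 A (c n ^ r)) atTop (nhds (b ^ r)) := by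
    have halg : ∀ t : ℝ≥0, algebraMap ℝ≥0 A t = ((t : ℝ)) • (1 : A) := by
      intro t
      rw [IsScalarTower.algebraMap_apply ℝ≥0 ℝ A, Algebra.algebraMap_eq_smul_one]
      rfl
    simp only [halg]
    have := (hc0.smul_const (1 : A)).const_add (b ^ r)
    simpa using this
  exact le_of_tendsto_of_tendsto' tendsto_const_nhds hlim (fun n => main (c n) (hcpos n))

lemma norm_le_of_le_algebraMap {x : A} {c : ℝ} (hc : 0 ≤ c) (hx : IsSelfAdjoint x)
    (h1 : x ≤ algebraMap ℝ A c) (h2 : -x ≤ algebraMap ℝ A c) : ‖x‖ ≤ c := by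
  obtain h | h := subsingleton_or_nontrivial A
  · simpa [Subsingleton.elim x 0] using hc
  obtain h | h := CStarAlgebra.norm_or_neg_norm_mem_spectrum hx
  · exact (le_algebraMap_iff_spectrum_le (a := x) hx).mp h1 _ h
  · have h' : ‖x‖ ∈ spectrum ℝ (-x) := by
      rw [← spectrum.neg_eq, Set.mem_neg]
      simpa using h
    exact (le_algebraMap_iff_spectrum_le (a := -x) hx.neg).mp h2 _ h'

end Stmt2Aux

/-- For bounded positive self-adjoint operators `A, B` with
`max(‖A‖,‖B‖) ≤ C` and `r ∈ [0,1]`, one has `‖A^r − B^r‖ ≤ ‖A − B‖^r`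
(operator powers via continuous functional calculus). -/
theorem stmt_2 {H : Type*} [NormedAddCommGroup H] [InnerProductSpace ℂ H] [CompleteSpace H]
    (A B : H →L[ℂ] H) (hA : 0 ≤ A) (hB : 0 ≤ B) (C : ℝ)
    (hAC : ‖A‖ ≤ C) (hBC : ‖B‖ ≤ C) (r : ℝ) (hr0 : 0 ≤ r) (hr1 : r ≤ 1) :
    ‖cfc (fun x : ℝ => x ^ r) A - cfc (fun x : ℝ => x ^ r) B‖ ≤ ‖A - B‖ ^ r := by
  rcases hr0.eq_or_lt with h0 | hrpos
  · have hfun : (fun x : ℝ => x ^ r) = fun _ : ℝ => (1:ℝ) := by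
      funext x; rw [← h0, Real.rpow_zero]
    rw [hfun, cfc_const_one ℝ A, cfc_const_one ℝ B, sub_self, norm_zero]
    exact Real.rpow_nonneg (norm_nonneg _) r
  · have hsel : IsSelfAdjoint (A - B) := (IsSelfAdjoint.of_nonneg hA).sub (.of_nonneg hB)
    set c : ℝ≥0 := ‖A - B‖₊ with hc
    have halg : algebraMap ℝ≥0 (H →L[ℂ] H) c = algebraMap ℝ (H →L[ℂ] H) ‖A - B‖ := by
      rw [IsScalarTower.algebraMap_apply ℝ≥0 ℝ (H →L[ℂ] H)]
      norm_num [hc]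
    have h1 : A ≤ B + algebraMap ℝ≥0 (H →L[ℂ] H) c := by
      rw [halg]
      calc A = B + (A - B) := by abel
        _ ≤ B + algebraMap ℝ (H →L[ℂ] H) ‖A - B‖ :=
            add_le_add_right hsel.le_algebraMap_norm_self B
    have h2 : B ≤ A + algebraMap ℝ≥0 (H →L[ℂ] H) c := by
      rw [halg]
      have hsel' : IsSelfAdjoint (B - A) := (IsSelfAdjoint.of_nonneg hB).sub (.of_nonneg hA)
      calc B = A + (B - A) := by abel
        _ ≤ A + algebraMap ℝ (H →L[ℂ] H) ‖B - A‖ :=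
            add_le_add_right hsel'.le_algebraMap_norm_self A
        _ = A + algebraMap ℝ (H →L[ℂ] H) ‖A - B‖ := by rw [norm_sub_rev]
    have k1 : A ^ r ≤ B ^ r + algebraMap ℝ≥0 (H →L[ℂ] H) (c ^ r) :=
      (Stmt2Aux.LH hA h1 hr0 hr1).trans (Stmt2Aux.add_algebraMap_rpow_le hB c hr0 hr1)
    have k2 : B ^ r ≤ A ^ r + algebraMap ℝ≥0 (H →L[ℂ] H) (c ^ r) :=
      (Stmt2Aux.LH hB h2 hr0 hr1).trans (Stmt2Aux.add_algebraMap_rpow_le hA c hr0 hr1)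
    have halg2 : algebraMap ℝ≥0 (H →L[ℂ] H) (c ^ r) = algebraMap ℝ (H →L[ℂ] H) (‖A - B‖ ^ r) := by
      rw [IsScalarTower.algebraMap_apply ℝ≥0 ℝ (H →L[ℂ] H)]
      congr 1
    rw [halg2] at k1 k2
    have hsel2 : IsSelfAdjoint ((A ^ r : H →L[ℂ] H) - B ^ r) :=
      (IsSelfAdjoint.of_nonneg CFC.rpow_nonneg).sub (.of_nonneg CFC.rpow_nonneg)
    have hb1 : (A ^ r : H →L[ℂ] H) - B ^ r ≤ algebraMap ℝ (H →L[ℂ] H) (‖A - B‖ ^ r) :=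
      sub_le_iff_le_add.mpr (k1.trans_eq (add_comm _ _))
    have hb2 : -((A ^ r : H →L[ℂ] H) - B ^ r) ≤ algebraMap ℝ (H →L[ℂ] H) (‖A - B‖ ^ r) := by
      rw [neg_sub]
      exact sub_le_iff_le_add.mpr (k2.trans_eq (add_comm _ _))
    have := Stmt2Aux.norm_le_of_le_algebraMap
      (Real.rpow_nonneg (norm_nonneg _) r) hsel2 hb1 hb2
    rwa [Stmt2Aux.rpow_eq_cfc_real r hA, Stmt2Aux.rpow_eq_cfc_real r hB] at this
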